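/- Let ε > 0 and let μ₀, μ₁ be probability measures on ℝⁿ with finite second moments and means m₀ = ∫x dμ₀(x), m₁ = ∫x dμ₁(x). Let μ̂₀, μ̂₁ be the centered measures obtained as the pushforwards of μ₀, μ₁ under the translations x ↦ x − m₀ and x ↦ x − m₁ respectively. Then OT^ε(μ₀, μ₁) = ‖m₀ − m₁‖² + OT^ε(μ̂₀, μ̂₁). -/

import Mathlib

open MeasureTheory ENNReal Matrix
open scoped Classical

noncomputable section

/-- `EuclideanSpace ℝ (Fin n)`. -/
abbrev E (n : ℕ) := EuclideanSpace ℝ (Fin n)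

/-- Kullback–Leibler divergence, valued in `ℝ≥0∞`. -/
def klDiv {α : Type*} [MeasurableSpace α] (γ ρ : Measure α) : ℝ≥0∞ :=
  if γ ≪ ρ ∧ Integrable (llr γ ρ) γ then ENNReal.ofReal (∫ x, llr γ ρ x ∂γ) else ∞

/-- The set of couplings (transport plans) between `μ` and `ν`. -/
def Couplings {α : Type*} [MeasurableSpace α] (μ ν : Measure α) : Set (Measure (α × α)) :=
  {γ | IsProbabilityMeasure γ ∧ γ.map Prod.fst = μ ∧ γ.map Prod.snd = ν}

/-- The total entropic transport cost of a plan `γ` between `μ` and `ν`: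
`∫ ‖x−y‖² dγ + ε · KL(γ ‖ μ ⊗ ν)`. -/
def entCost {n : ℕ} (ε : ℝ) (μ ν : Measure (E n)) (γ : Measure (E n × E n)) : ℝ≥0∞ :=
  (∫⁻ p, ENNReal.ofReal (‖p.1 - p.2‖ ^ 2) ∂γ) + ENNReal.ofReal ε * klDiv γ (μ.prod ν)

/-- Entropic optimal transport cost `OT^ε(μ, ν)` with cost `‖x−y‖²`. -/
def OTe {n : ℕ} (ε : ℝ) (μ ν : Measure (E n)) : ℝ≥0∞ :=
  ⨅ γ ∈ Couplings μ ν, entCost ε μ ν γ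

/-- The unique symmetric positive semidefinite square root of a positive
semidefinite matrix (junk value `0` otherwise). -/
def sqrtm {n : ℕ} (A : Matrix (Fin n) (Fin n) ℝ) : Matrix (Fin n) (Fin n) ℝ :=
  if h : A.PosSemidef then
    h.1.eigenvectorUnitary.1 * diagonal (Real.sqrt ∘ h.1.eigenvalues) *
      (star h.1.eigenvectorUnitary : Matrix (Fin n) (Fin n) ℝ)
  else 0

/-- Density of the multivariate Gaussian `N(m, K)` on `ℝⁿ`. -/
def gaussianPDF {n : ℕ} (m : E n) (K : Matrix (Fin n) (Fin n) ℝ) (x : E n) : ℝ :=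
  (Real.sqrt ((2 * Real.pi) ^ n * K.det))⁻¹ *
    Real.exp (-(inner ℝ (x - m) (Matrix.toEuclideanLin K⁻¹ (x - m)) : ℝ) / 2)

/-- The multivariate Gaussian measure `N(m, K)` on `ℝⁿ` (with invertible covariance). -/
def gaussian {n : ℕ} (m : E n) (K : Matrix (Fin n) (Fin n) ℝ) : Measure (E n) :=
  volume.withDensity fun x => ENNReal.ofReal (gaussianPDF m K x)

/-- The 2-Sinkhorn divergence `S₂^ε(μ, ν) = OT^ε(μ,ν) − (OT^ε(μ,μ) + OT^ε(ν,ν))/2`. -/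
def Sink {n : ℕ} (ε : ℝ) (μ ν : Measure (E n)) : ℝ :=
  (OTe ε μ ν).toReal - ((OTe ε μ μ).toReal + (OTe ε ν ν).toReal) / 2

end

noncomputable section AuxProof

open scoped RealInnerProductSpace

/-- KL divergence is invariant under pushforward by a measurable equivalence. -/
private lemma klDiv_map_equiv {α β : Type*} [MeasurableSpace α] [MeasurableSpace β]
    (e : α ≃ᵐ β) (γ ρ : Measure α) [SigmaFinite γ] [SigmaFinite ρ] :
    klDiv (γ.map e) (ρ.map e) = klDiv γ ρ := by
  have hemb : MeasurableEmbedding (e : α → β) := e.measurableEmbedding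
  by_cases hac : γ ≪ ρ
  · have hac' : γ.map e ≪ ρ.map e := hac.map e.measurable
    have hrn := hemb.rnDeriv_map γ ρ
    have hllr : (fun x => llr (γ.map e) (ρ.map e) (e x)) =ᵐ[γ] llr γ ρ := by
      filter_upwards [hac.ae_le hrn] with x hx
      simp only [llr, hx]
    have hint : Integrable (llr (γ.map e) (ρ.map e)) (γ.map e) ↔ Integrable (llr γ ρ) γ := by
      rw [hemb.integrable_map_iff]
      exact integrable_congr hllr
    have hI : ∫ x, llr (γ.map e) (ρ.map e) x ∂(γ.map e) = ∫ x, llr γ ρ x ∂γ := by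
      rw [hemb.integral_map]
      exact integral_congr_ae hllr
    unfold klDiv
    by_cases hi : Integrable (llr γ ρ) γ
    · rw [if_pos ⟨hac', hint.mpr hi⟩, if_pos ⟨hac, hi⟩, hI]
    · rw [if_neg (fun h => hi (hint.mp h.2)), if_neg (fun h => hi h.2)]
  · have hac' : ¬ γ.map e ≪ ρ.map e := fun h => hac (by
      have h2 := h.map e.symm.measurable
      simpa [MeasurableEquiv.map_symm_map] using h2)
    unfold klDiv
    rw [if_neg (fun h => hac' h.1), if_neg (fun h => hac h.1)]

variable {n : ℕ} {μ ν : Measure (E n)} {γ : Measure (E n × E n)}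

private lemma integrable_id_of_sq [IsProbabilityMeasure μ]
    (h : Integrable (fun x => ‖x‖ ^ 2) μ) : Integrable (fun x : E n => x) μ := by
  refine ((integrable_const (1 : ℝ)).add h).mono' aestronglyMeasurable_id ?_
  filter_upwards with x
  have h1 : ‖x‖ ≤ 1 + ‖x‖ ^ 2 := by nlinarith [norm_nonneg x, sq_nonneg (‖x‖ - 1)]
  have h2 : (0:ℝ) ≤ 1 + ‖x‖ ^ 2 := by positivity
  simpa [Real.norm_eq_abs, abs_of_nonneg h2] using h1

private lemma int_fst_sq (hγ : γ.map Prod.fst = μ) (h : Integrable (fun x => ‖x‖ ^ 2) μ) :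
    Integrable (fun p : E n × E n => ‖p.1‖ ^ 2) γ := by
  have h' : Integrable (fun x : E n => ‖x‖ ^ 2) (γ.map Prod.fst) := hγ ▸ h
  have := (integrable_map_measure (continuous_norm.pow 2).aestronglyMeasurable
    measurable_fst.aemeasurable).mp h'
  exact this

private lemma int_snd_sq (hγ : γ.map Prod.snd = ν) (h : Integrable (fun x => ‖x‖ ^ 2) ν) :
    Integrable (fun p : E n × E n => ‖p.2‖ ^ 2) γ := by
  have h' : Integrable (fun x : E n => ‖x‖ ^ 2) (γ.map Prod.snd) := hγ ▸ h
  have := (integrable_map_measure (continuous_norm.pow 2).aestronglyMeasurable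
    measurable_snd.aemeasurable).mp h'
  exact this

private lemma int_fst [IsProbabilityMeasure μ] (hγ : γ.map Prod.fst = μ)
    (h : Integrable (fun x => ‖x‖ ^ 2) μ) :
    Integrable (fun p : E n × E n => p.1) γ := by
  have h' : Integrable (fun x : E n => x) (γ.map Prod.fst) := hγ ▸ integrable_id_of_sq h
  have := (integrable_map_measure aestronglyMeasurable_id
    measurable_fst.aemeasurable).mp h'
  simpa [Function.comp] using this

private lemma int_snd [IsProbabilityMeasure ν] (hγ : γ.map Prod.snd = ν)
    (h : Integrable (fun x => ‖x‖ ^ 2) ν) :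
    Integrable (fun p : E n × E n => p.2) γ := by
  have h' : Integrable (fun x : E n => x) (γ.map Prod.snd) := hγ ▸ integrable_id_of_sq h
  have := (integrable_map_measure aestronglyMeasurable_id
    measurable_snd.aemeasurable).mp h'
  simpa [Function.comp] using this

private lemma int_cost [IsFiniteMeasure γ]
    (h1 : Integrable (fun p : E n × E n => ‖p.1‖ ^ 2) γ)
    (h2 : Integrable (fun p : E n × E n => ‖p.2‖ ^ 2) γ) (c d : E n) :
    Integrable (fun p : E n × E n => ‖(p.1 - c) - (p.2 - d)‖ ^ 2) γ := by
  have hcont : Continuous fun p : E n × E n => ‖(p.1 - c) - (p.2 - d)‖ ^ 2 :=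
    (((continuous_fst.sub continuous_const).sub (continuous_snd.sub continuous_const)).norm).pow 2
  refine (((h1.add h2).add (integrable_const (‖c‖ ^ 2 + ‖d‖ ^ 2))).const_mul 4).mono'
    hcont.aestronglyMeasurable ?_
  filter_upwards with p
  have ht : ‖(p.1 - c) - (p.2 - d)‖ ≤ (‖p.1‖ + ‖c‖) + (‖p.2‖ + ‖d‖) :=
    (norm_sub_le _ _).trans (add_le_add (norm_sub_le _ _) (norm_sub_le _ _))
  have h0 : (0:ℝ) ≤ ‖(p.1 - c) - (p.2 - d)‖ := norm_nonneg _
  have n1 := norm_nonneg p.1; have n2 := norm_nonneg p.2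
  have n3 := norm_nonneg c; have n4 := norm_nonneg d
  rw [Real.norm_eq_abs, abs_of_nonneg (by positivity)]
  simp only [Pi.add_apply]
  nlinarith [sq_nonneg (‖p.1‖ - ‖p.2‖), sq_nonneg (‖p.1‖ - ‖c‖), sq_nonneg (‖p.1‖ - ‖d‖),
    sq_nonneg (‖p.2‖ - ‖c‖), sq_nonneg (‖p.2‖ - ‖d‖), sq_nonneg (‖c‖ - ‖d‖)]

private lemma cost_shift [IsProbabilityMeasure μ] [IsProbabilityMeasure ν]
    (hμ : Integrable (fun x => ‖x‖ ^ 2) μ) (hν : Integrable (fun x => ‖x‖ ^ 2) ν)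
    (hγ : γ ∈ Couplings μ ν) (c d : E n) :
    ∫ p : E n × E n, ‖(p.1 - c) - (p.2 - d)‖ ^ 2 ∂γ
      = (∫ p : E n × E n, ‖p.1 - p.2‖ ^ 2 ∂γ)
        - 2 * ⟪(∫ x, x ∂μ) - ∫ x, x ∂ν, c - d⟫ + ‖c - d‖ ^ 2 := by
  obtain ⟨hprob, h1, h2⟩ := hγ
  haveI := hprob
  have i1 := int_fst_sq h1 hμ
  have i2 := int_snd_sq h2 hν
  have ifst := int_fst h1 hμ
  have isnd := int_snd h2 hν
  have isub : Integrable (fun p : E n × E n => p.1 - p.2) γ := ifst.sub isnd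
  have iorig : Integrable (fun p : E n × E n => ‖p.1 - p.2‖ ^ 2) γ := by
    simpa using int_cost i1 i2 0 0
  have iinner : Integrable (fun p : E n × E n => ⟪p.1 - p.2, c - d⟫) γ := isub.inner_const _
  have hpt : ∀ p : E n × E n, ‖(p.1 - c) - (p.2 - d)‖ ^ 2
      = ‖p.1 - p.2‖ ^ 2 - 2 * ⟪p.1 - p.2, c - d⟫ + ‖c - d‖ ^ 2 := by
    intro p
    have hh : (p.1 - c) - (p.2 - d) = (p.1 - p.2) - (c - d) := by abel
    rw [hh, norm_sub_sq_real]
  have e1 : ∫ p : E n × E n, p.1 ∂γ = ∫ x, x ∂μ := by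
    rw [← h1]
    exact (integral_map measurable_fst.aemeasurable aestronglyMeasurable_id).symm
  have e2 : ∫ p : E n × E n, p.2 ∂γ = ∫ x, x ∂ν := by
    rw [← h2]
    exact (integral_map measurable_snd.aemeasurable aestronglyMeasurable_id).symm
  have einner : ∫ p : E n × E n, ⟪p.1 - p.2, c - d⟫ ∂γ
      = ⟪(∫ x, x ∂μ) - ∫ x, x ∂ν, c - d⟫ := by
    have hcomm : ∫ p : E n × E n, ⟪p.1 - p.2, c - d⟫ ∂γ
        = ∫ p : E n × E n, ⟪c - d, p.1 - p.2⟫ ∂γ :=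
      integral_congr_ae (Filter.Eventually.of_forall fun p => real_inner_comm _ _)
    rw [hcomm, integral_inner isub (c - d), integral_sub ifst isnd, e1, e2, real_inner_comm]
  calc ∫ p : E n × E n, ‖(p.1 - c) - (p.2 - d)‖ ^ 2 ∂γ
      = ∫ p : E n × E n, (‖p.1 - p.2‖ ^ 2 - 2 * ⟪p.1 - p.2, c - d⟫ + ‖c - d‖ ^ 2) ∂γ := by
        simp_rw [hpt]
    _ = (∫ p : E n × E n, ‖p.1 - p.2‖ ^ 2 ∂γ)
        - 2 * ⟪(∫ x, x ∂μ) - ∫ x, x ∂ν, c - d⟫ + ‖c - d‖ ^ 2 := by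
        have iA : Integrable (fun p : E n × E n =>
            ‖p.1 - p.2‖ ^ 2 - 2 * ⟪p.1 - p.2, c - d⟫) γ := iorig.sub (iinner.const_mul 2)
        rw [integral_add iA (integrable_const _),
          integral_sub iorig (iinner.const_mul 2), integral_const_mul, einner, integral_const]
        simp

private lemma couplings_map_sub (hγ : γ ∈ Couplings μ ν) (c d : E n) :
    γ.map (Prod.map (· - c) (· - d)) ∈ Couplings (μ.map (· - c)) (ν.map (· - d)) := by
  obtain ⟨hp, h1, h2⟩ := hγ
  haveI := hp
  have hmc : Measurable fun x : E n => x - c := measurable_id.sub measurable_const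
  have hmd : Measurable fun x : E n => x - d := measurable_id.sub measurable_const
  have hm : Measurable (Prod.map (fun x : E n => x - c) (fun x : E n => x - d)) :=
    hmc.prodMap hmd
  refine ⟨Measure.isProbabilityMeasure_map hm.aemeasurable, ?_, ?_⟩
  · rw [Measure.map_map measurable_fst hm, ← h1, Measure.map_map hmc measurable_fst]
    rfl
  · rw [Measure.map_map measurable_snd hm, ← h2, Measure.map_map hmd measurable_snd]
    rfl

private lemma centered_sq [IsProbabilityMeasure μ]
    (h : Integrable (fun x => ‖x‖ ^ 2) μ) (a : E n) :
    Integrable (fun x => ‖x‖ ^ 2) (μ.map (· - a)) := by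
  have hma : Measurable fun x : E n => x - a := measurable_id.sub measurable_const
  rw [integrable_map_measure (g := fun x : E n => ‖x‖ ^ 2)
    (continuous_norm.pow 2).aestronglyMeasurable hma.aemeasurable]
  have hc : ((fun x : E n => ‖x‖ ^ 2) ∘ fun x => x - a) = fun x : E n => ‖x - a‖ ^ 2 := rfl
  rw [hc]
  refine ((h.const_mul 2).add (integrable_const (2 * ‖a‖ ^ 2))).mono'
    (((continuous_id.sub continuous_const).norm.pow 2)).aestronglyMeasurable ?_
  filter_upwards with x
  have ht : ‖x - a‖ ≤ ‖x‖ + ‖a‖ := norm_sub_le _ _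
  have n1 := norm_nonneg x; have n2 := norm_nonneg a
  have h0 : (0:ℝ) ≤ ‖x - a‖ := norm_nonneg _
  rw [Real.norm_eq_abs, abs_of_nonneg (by positivity)]
  simp only [Pi.add_apply]
  nlinarith [sq_nonneg (‖x‖ - ‖a‖)]

private lemma centered_mean [IsProbabilityMeasure μ]
    (h : Integrable (fun x => ‖x‖ ^ 2) μ) (a : E n) (ha : a = ∫ x, x ∂μ) :
    ∫ x, x ∂(μ.map (· - a)) = 0 := by
  have hma : Measurable fun x : E n => x - a := measurable_id.sub measurable_const
  have h1 : ∫ x, x ∂(μ.map (· - a)) = ∫ x, x - a ∂μ :=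
    integral_map hma.aemeasurable aestronglyMeasurable_id
  rw [h1, integral_sub (integrable_id_of_sq h) (integrable_const a)]
  simp [ha]

private lemma entCost_map (ε : ℝ) (μ ν : Measure (E n))
    [IsProbabilityMeasure μ] [IsProbabilityMeasure ν]
    (hμ : Integrable (fun x => ‖x‖ ^ 2) μ) (hν : Integrable (fun x => ‖x‖ ^ 2) ν)
    {γ : Measure (E n × E n)} (hγ : γ ∈ Couplings μ ν) (a b : E n)
    (ha : a = ∫ x, x ∂μ) (hb : b = ∫ x, x ∂ν) :
    entCost ε μ ν γ
      = ENNReal.ofReal (‖a - b‖ ^ 2)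
        + entCost ε (μ.map (· - a)) (ν.map (· - b)) (γ.map (Prod.map (· - a) (· - b))) := by
  haveI := hγ.1
  have hma : Measurable fun x : E n => x - a := measurable_id.sub measurable_const
  have hmb : Measurable fun x : E n => x - b := measurable_id.sub measurable_const
  have hmT : Measurable (Prod.map (fun x : E n => x - a) (fun x : E n => x - b)) :=
    hma.prodMap hmb
  set e : (E n × E n) ≃ᵐ (E n × E n) :=
    (MeasurableEquiv.subRight a).prodCongr (MeasurableEquiv.subRight b) with he_def
  have he : ⇑e = Prod.map (· - a) (· - b) := by
    funext p; cases p; rfl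
  have hprod : (μ.map (· - a)).prod (ν.map (· - b)) = (μ.prod ν).map e := by
    rw [he]
    exact Measure.map_prod_map μ ν hma hmb
  have hKL : klDiv (γ.map (Prod.map (· - a) (· - b))) ((μ.map (· - a)).prod (ν.map (· - b)))
      = klDiv γ (μ.prod ν) := by
    rw [hprod, ← he]
    exact klDiv_map_equiv e γ (μ.prod ν)
  have iorig : Integrable (fun p : E n × E n => ‖p.1 - p.2‖ ^ 2) γ := by
    simpa using int_cost (int_fst_sq hγ.2.1 hμ) (int_snd_sq hγ.2.2 hν) 0 0
  have ishift := int_cost (int_fst_sq hγ.2.1 hμ) (int_snd_sq hγ.2.2 hν) a b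
  have hcost_real : ∫ p : E n × E n, ‖(p.1 - a) - (p.2 - b)‖ ^ 2 ∂γ
      = (∫ p : E n × E n, ‖p.1 - p.2‖ ^ 2 ∂γ) - ‖a - b‖ ^ 2 := by
    rw [cost_shift hμ hν hγ a b, ← ha, ← hb, real_inner_self_eq_norm_sq]
    ring
  have hnn : 0 ≤ ∫ p : E n × E n, ‖(p.1 - a) - (p.2 - b)‖ ^ 2 ∂γ :=
    integral_nonneg fun p => by positivity
  have hm : Measurable fun p : E n × E n => ENNReal.ofReal (‖p.1 - p.2‖ ^ 2) :=
    ENNReal.measurable_ofReal.comp ((continuous_fst.sub continuous_snd).norm.pow 2).measurable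
  have hcost : ∫⁻ p, ENNReal.ofReal (‖p.1 - p.2‖ ^ 2) ∂(γ.map (Prod.map (· - a) (· - b)))
      = ∫⁻ p, ENNReal.ofReal (‖(p.1 - a) - (p.2 - b)‖ ^ 2) ∂γ := by
    rw [lintegral_map hm hmT]
    simp [Prod.map]
  have l1 : ∫⁻ p, ENNReal.ofReal (‖p.1 - p.2‖ ^ 2) ∂γ
      = ENNReal.ofReal (∫ p : E n × E n, ‖p.1 - p.2‖ ^ 2 ∂γ) :=
    (ofReal_integral_eq_lintegral_ofReal iorig
      (Filter.Eventually.of_forall fun p => by positivity)).symm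
  have l2 : ∫⁻ p, ENNReal.ofReal (‖(p.1 - a) - (p.2 - b)‖ ^ 2) ∂γ
      = ENNReal.ofReal (∫ p : E n × E n, ‖(p.1 - a) - (p.2 - b)‖ ^ 2 ∂γ) :=
    (ofReal_integral_eq_lintegral_ofReal ishift
      (Filter.Eventually.of_forall fun p => by positivity)).symm
  have key : ∫⁻ p, ENNReal.ofReal (‖p.1 - p.2‖ ^ 2) ∂γ
      = ENNReal.ofReal (‖a - b‖ ^ 2)
        + ∫⁻ p, ENNReal.ofReal (‖p.1 - p.2‖ ^ 2) ∂(γ.map (Prod.map (· - a) (· - b))) := by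
    rw [hcost, l1, l2, ← ENNReal.ofReal_add (by positivity) hnn]
    congr 1
    rw [hcost_real]; ring
  rw [entCost, entCost, hKL, key]
  ring

end AuxProof

theorem stmt_1 {n : ℕ} (ε : ℝ) (hε : 0 < ε) (μ₀ μ₁ : Measure (E n))
    [IsProbabilityMeasure μ₀] [IsProbabilityMeasure μ₁]
    (h₀ : Integrable (fun x => ‖x‖ ^ 2) μ₀) (h₁ : Integrable (fun x => ‖x‖ ^ 2) μ₁)
    (m₀ m₁ : E n) (hm₀ : m₀ = ∫ x, x ∂μ₀) (hm₁ : m₁ = ∫ x, x ∂μ₁) :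
    OTe ε μ₀ μ₁ =
      ENNReal.ofReal (‖m₀ - m₁‖ ^ 2) +
        OTe ε (μ₀.map fun x => x - m₀) (μ₁.map fun x => x - m₁) := by
  classical
  set k := ENNReal.ofReal (‖m₀ - m₁‖ ^ 2) with hk
  have hs₀ : Measurable fun x : E n => x - m₀ := measurable_id.sub measurable_const
  have hs₁ : Measurable fun x : E n => x - m₁ := measurable_id.sub measurable_const
  have hs₀' : Measurable fun x : E n => x - (-m₀) := measurable_id.sub measurable_const
  have hs₁' : Measurable fun x : E n => x - (-m₁) := measurable_id.sub measurable_const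
  have hmm : Measurable (Prod.map (fun x : E n => x - m₀) (fun x : E n => x - m₁)) :=
    hs₀.prodMap hs₁
  have hmm' : Measurable (Prod.map (fun x : E n => x - (-m₀)) (fun x : E n => x - (-m₁))) :=
    hs₀'.prodMap hs₁'
  -- the backward translation undoes the forward one
  have hT'comp : ∀ γ' : Measure (E n × E n),
      (γ'.map (Prod.map (· - (-m₀)) (· - (-m₁)))).map (Prod.map (· - m₀) (· - m₁)) = γ' := by
    intro γ'
    rw [Measure.map_map hmm hmm']
    have hcomp : (Prod.map (fun x : E n => x - m₀) (fun x : E n => x - m₁)) ∘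
        (Prod.map (· - (-m₀)) (· - (-m₁))) = id := by
      funext p; cases p; simp [Prod.map]
    rw [hcomp, Measure.map_id]
  have hμback₀ : ((μ₀.map fun x => x - m₀).map (· - (-m₀))) = μ₀ := by
    rw [Measure.map_map hs₀' hs₀]
    have : ((fun x : E n => x - (-m₀)) ∘ fun x => x - m₀) = id := by
      funext x; simp
    rw [this, Measure.map_id]
  have hμback₁ : ((μ₁.map fun x => x - m₁).map (· - (-m₁))) = μ₁ := by
    rw [Measure.map_map hs₁' hs₁]
    have : ((fun x : E n => x - (-m₁)) ∘ fun x => x - m₁) = id := by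
      funext x; simp
    rw [this, Measure.map_id]
  have hback : ∀ γ' ∈ Couplings (μ₀.map fun x => x - m₀) (μ₁.map fun x => x - m₁),
      γ'.map (Prod.map (· - (-m₀)) (· - (-m₁))) ∈ Couplings μ₀ μ₁ := by
    intro γ' hγ'
    have hmem := couplings_map_sub hγ' (-m₀) (-m₁)
    rwa [hμback₀, hμback₁] at hmem
  have hfwd : ∀ γ ∈ Couplings μ₀ μ₁,
      entCost ε μ₀ μ₁ γ
        = k + entCost ε (μ₀.map fun x => x - m₀) (μ₁.map fun x => x - m₁)
            (γ.map (Prod.map (· - m₀) (· - m₁))) := fun γ hγ =>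
    entCost_map ε μ₀ μ₁ h₀ h₁ hγ m₀ m₁ hm₀ hm₁
  have hbwd : ∀ γ' ∈ Couplings (μ₀.map fun x => x - m₀) (μ₁.map fun x => x - m₁),
      entCost ε μ₀ μ₁ (γ'.map (Prod.map (· - (-m₀)) (· - (-m₁))))
        = k + entCost ε (μ₀.map fun x => x - m₀) (μ₁.map fun x => x - m₁) γ' := by
    intro γ' hγ'
    have h := hfwd _ (hback γ' hγ')
    rwa [hT'comp γ'] at h
  apply le_antisymm
  · conv_rhs => rw [OTe]
    simp_rw [ENNReal.add_iInf]
    refine le_iInf fun γ' => le_iInf fun hγ' => ?_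
    rw [← hbwd γ' hγ']
    simp only [OTe]
    exact iInf₂_le _ (hback γ' hγ')
  · simp only [OTe]
    refine le_iInf fun γ => le_iInf fun hγ => ?_
    rw [hfwd γ hγ]
    refine add_le_add_right ?_ k
    exact iInf₂_le _ (couplings_map_sub hγ m₀ m₁)
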